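/- Let 0 < ρ < 1 and ε = ε_Λ(√(ρ(1−ρ)/(1+ρ))). If ε < 1/2, then the Kullback–Leibler divergence of the mixture density from the bivariate Gaussian density satisfies D(f_{X̄,Ȳ} ‖ f_{X,Y}) = ∫_{ℝ²} f_{X̄,Ȳ}(x,y) · ln( f_{X̄,Ȳ}(x,y) / f_{X,Y}(x,y) ) dx dy ≤ ln(1 + 4ε). -/

import Mathlib

open Real

/-- The centered Gaussian density with standard deviation `σ`. -/
noncomputable def gpdf (σ x : ℝ) : ℝ :=
  (1 / (Real.sqrt (2 * Real.pi) * σ)) * Real.exp (-(x ^ 2) / (2 * σ ^ 2))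

/-- The discrete Gaussian distribution over the lattice `Λ = bℤ` with parameter `σ`,
evaluated at the lattice point `b * k`. -/
noncomputable def dgauss (b σ : ℝ) (k : ℤ) : ℝ :=
  gpdf σ (b * k) / ∑' j : ℤ, gpdf σ (b * j)

/-- The flatness factor of the lattice `Λ = bℤ` at parameter `σ`. -/
noncomputable def flatness (b σ : ℝ) : ℝ :=
  ⨆ x : ℝ, |b * (∑' k : ℤ, gpdf σ (x - b * k)) - 1|

/-- The bivariate Gaussian density with unit variances and correlation `ρ`. -/
noncomputable def fXY (ρ x y : ℝ) : ℝ :=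
  (1 / (2 * Real.pi * Real.sqrt (1 - ρ ^ 2))) *
    Real.exp (-(x ^ 2 + y ^ 2 - 2 * ρ * x * y) / (2 * (1 - ρ ^ 2)))

/-- The density of `(W̄ + √(1-ρ)N₁, W̄ + √(1-ρ)N₂)` where `W̄ ~ D_{Λ,√ρ}`, `Λ = bℤ`. -/
noncomputable def fXbarYbar (ρ b x y : ℝ) : ℝ :=
  ∑' k : ℤ, dgauss b (Real.sqrt ρ) k * gpdf (Real.sqrt (1 - ρ)) (x - b * k) *
    gpdf (Real.sqrt (1 - ρ)) (y - b * k)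

open MeasureTheory

lemma gpdf_pos {σ : ℝ} (hσ : 0 < σ) (x : ℝ) : 0 < gpdf σ x := by
  unfold gpdf
  have h2π : 0 < Real.sqrt (2 * Real.pi) := Real.sqrt_pos.2 (by positivity)
  positivity

lemma gpdf_neg (σ x : ℝ) : gpdf σ (-x) = gpdf σ x := by simp [gpdf, neg_sq]

lemma summable_gpdf {σ b : ℝ} (hσ : 0 < σ) (hb : 0 < b) (x : ℝ) :
    Summable (fun k : ℤ => gpdf σ (x - b * k)) := by
  unfold gpdf
  apply Summable.mul_left
  set T : ℝ := b ^ 2 / (2 * σ ^ 2 * π) with hT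
  set S : ℝ := |x| * b / (2 * σ ^ 2 * π) with hS
  have hTpos : 0 < T := by positivity
  have key := summable_pow_mul_jacobiTheta₂_term_bound S hTpos 0
  simp only [pow_zero, one_mul] at key
  refine key.of_nonneg_of_le (fun k => (Real.exp_pos _).le) (fun k => ?_)
  rw [Real.exp_le_exp]
  have hb1 : b * x * k ≤ b * |x| * |(k:ℝ)| := by
    calc b * x * k ≤ |b * x * k| := le_abs_self _
    _ = b * |x| * |(k:ℝ)| := by rw [abs_mul, abs_mul, abs_of_pos hb]
  have hπ : (0:ℝ) < π := Real.pi_pos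
  have hexp : -π * (T * (k:ℝ) ^ 2 - 2 * S * |(k:ℝ)|)
      = -(b^2 * (k:ℝ)^2 - 2 * (|x| * b) * |(k:ℝ)|) / (2 * σ ^ 2) := by
    rw [hT, hS]; field_simp
  push_cast
  rw [hexp]
  rw [div_le_div_iff_of_pos_right (by positivity)]
  nlinarith [sq_nonneg x, sq_nonneg ((k:ℝ))]

lemma theta_bdd {σ b : ℝ} (hσ : 0 < σ) (hb : 0 < b) :
    ∃ M : ℝ, ∀ x : ℝ, (∑' k : ℤ, gpdf σ (x - b * k)) ≤ M := by
  set T : ℝ := b ^ 2 / (2 * σ ^ 2 * π) with hTdef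
  have hTpos : 0 < T := by positivity
  set h : ℤ → ℝ := fun j => (1 / (Real.sqrt (2 * π) * σ)) *
    Real.exp (-π * (T * (j:ℝ) ^ 2 - 2 * T * |(j:ℝ)|)) with hdef
  have hsum : Summable h := by
    apply Summable.mul_left
    have := summable_pow_mul_jacobiTheta₂_term_bound T hTpos 0
    simp only [pow_zero, one_mul] at this
    refine this.congr fun j => ?_
    push_cast
    rfl
  refine ⟨∑' j : ℤ, h j, fun x => ?_⟩
  set n : ℤ := round (x / b) with hn
  have hr : |x - b * n| ≤ b / 2 := by
    have := abs_sub_round (x / b)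
    have h2 : |x / b - n| * b ≤ (1/2) * b := mul_le_mul_of_nonneg_right this hb.le
    rw [abs_sub_comm] at this
    have hxb : x - b * n = b * (x / b - n) := by field_simp
    rw [hxb, abs_mul, abs_of_pos hb]
    nlinarith [h2]
  have hle : ∀ k : ℤ, gpdf σ (x - b * k) ≤ h (k - n) := by
    intro k
    unfold gpdf
    rw [hdef]
    apply mul_le_mul_of_nonneg_left ?_ (by positivity)
    rw [Real.exp_le_exp]
    have hexp : -π * (T * ((k - n : ℤ):ℝ) ^ 2 - 2 * T * |((k - n : ℤ):ℝ)|)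
        = -(b ^ 2 * ((k-n:ℤ):ℝ) ^ 2 - 2 * b ^ 2 * |((k-n:ℤ):ℝ)|) / (2 * σ ^ 2) := by
      rw [hTdef]; field_simp
    rw [hexp, div_le_div_iff_of_pos_right (by positivity)]
    push_cast
    set u : ℝ := (k:ℝ) - (n:ℝ) with hu
    set w : ℝ := x - b * k with hw
    have htri : b * |u| ≤ |w| + b / 2 := by
      have h1 : b * u = -w + (x - b * n) := by rw [hu, hw]; ring
      calc b * |u| = |b * u| := by rw [abs_mul, abs_of_pos hb]
        _ ≤ |w| + |x - b * n| := by rw [h1]; exact (abs_add_le _ _).trans (by rw [abs_neg])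
        _ ≤ |w| + b / 2 := by linarith [hr]
    have hw2 : w ^ 2 = |w| ^ 2 := (sq_abs w).symm
    have hu2 : u ^ 2 = |u| ^ 2 := (sq_abs u).symm
    rcases le_or_gt (|u|) 2 with hc | hc
    · nlinarith [sq_nonneg w,
        mul_nonneg (mul_nonneg (sq_nonneg b) (abs_nonneg u)) (by linarith : (0:ℝ) ≤ 2 - |u|)]
    · have h3 : 0 ≤ b * |u| - b / 2 := by nlinarith
      have h4 : (b * |u| - b / 2) ^ 2 ≤ |w| ^ 2 :=
        pow_le_pow_left₀ h3 (by linarith) 2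
      nlinarith [mul_nonneg (sq_nonneg b) (abs_nonneg u), sq_nonneg b]
  calc (∑' k : ℤ, gpdf σ (x - b * k)) ≤ ∑' k : ℤ, h (k - n) :=
        Summable.tsum_le_tsum hle (summable_gpdf hσ hb x)
          (((Equiv.subRight n).summable_iff (f := h)).2 hsum)
    _ = ∑' j : ℤ, h j := (Equiv.subRight n).tsum_eq h

lemma flatness_nonneg (b σ : ℝ) : 0 ≤ flatness b σ :=
  Real.iSup_nonneg fun _ => abs_nonneg _

lemma theta_le_flatness {σ b : ℝ} (hσ : 0 < σ) (hb : 0 < b) (x : ℝ) :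
    b * (∑' k : ℤ, gpdf σ (x - b * k)) ≤ 1 + flatness b σ := by
  obtain ⟨M, hM⟩ := theta_bdd hσ hb
  have hbdd : BddAbove (Set.range fun x : ℝ => |b * (∑' k : ℤ, gpdf σ (x - b * k)) - 1|) := by
    refine ⟨b * M + 1, fun y hy => ?_⟩
    obtain ⟨x, rfl⟩ := hy
    have h1 : 0 ≤ ∑' k : ℤ, gpdf σ (x - b * k) :=
      tsum_nonneg fun k => (gpdf_pos hσ _).le
    have h2 := hM x
    rw [abs_le]
    constructor <;> nlinarith
  have := le_ciSup hbdd x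
  rw [← flatness] at this
  have := (abs_le.1 this).2
  linarith [(abs_le.1 (le_ciSup hbdd x (f := fun x : ℝ => |b * (∑' k : ℤ, gpdf σ (x - b * k)) - 1|))).2]

lemma summable_gpdf_lattice {σ b : ℝ} (hσ : 0 < σ) (hb : 0 < b) :
    Summable (fun j : ℤ => gpdf σ (b * j)) := by
  refine (summable_gpdf hσ hb 0).congr fun j => ?_
  rw [show (0:ℝ) - b * j = -(b * j) by ring, gpdf_neg]

lemma one_le_theta_lattice {σ b : ℝ} (hσ : 0 < σ) (hb : 0 < b) :
    1 ≤ b * ∑' j : ℤ, gpdf σ (b * j) := by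
  set a : ℝ := b ^ 2 / (2 * π * σ ^ 2) with ha
  have hapos : 0 < a := by positivity
  have h1 : ∀ j : ℤ, gpdf σ (b * j) = (1 / (Real.sqrt (2 * π) * σ)) * Real.exp (-π * a * (j:ℝ)^2) := by
    intro j
    unfold gpdf
    congr 2
    rw [ha]; field_simp
  have h2 : (∑' j : ℤ, gpdf σ (b * j))
      = (1 / (Real.sqrt (2 * π) * σ)) * ((1:ℝ) / a ^ ((1:ℝ)/2) * ∑' n : ℤ, Real.exp (-π / a * (n:ℝ)^2)) := by
    rw [tsum_congr h1, tsum_mul_left, Real.tsum_exp_neg_mul_int_sq hapos]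
  have hsum2 : Summable fun n : ℤ => Real.exp (-π / a * (n:ℝ)^2) := by
    have := summable_pow_mul_jacobiTheta₂_term_bound 0 (show (0:ℝ) < 1/a by positivity) 0
    simp only [pow_zero, one_mul] at this
    refine this.congr fun n => ?_
    congr 1
    field_simp
    ring
  have h3 : 1 ≤ ∑' n : ℤ, Real.exp (-π / a * (n:ℝ)^2) := by
    have := Summable.le_tsum hsum2 0 (fun j _ => (Real.exp_pos _).le)
    simpa using this
  have h4 : a ^ ((1:ℝ)/2) = b / (Real.sqrt (2 * π) * σ) := by
    rw [← Real.sqrt_eq_rpow, ha, Real.sqrt_div' _ ?h, Real.sqrt_mul (by positivity),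
      Real.sqrt_sq hσ.le, Real.sqrt_sq hb.le]
    case h => positivity
  have hfinal : b * ∑' j : ℤ, gpdf σ (b * j)
      = (∑' n : ℤ, Real.exp (-π / a * (n:ℝ)^2)) := by
    rw [h2, h4]
    field_simp
  rw [hfinal]
  exact h3

lemma term_id {ρ : ℝ} (hρ0 : 0 < ρ) (hρ1 : ρ < 1) (x y t : ℝ) :
    gpdf (Real.sqrt ρ) t * gpdf (Real.sqrt (1 - ρ)) (x - t) * gpdf (Real.sqrt (1 - ρ)) (y - t)
      = fXY ρ x y * gpdf (Real.sqrt (ρ * (1 - ρ) / (1 + ρ))) (ρ * (x + y) / (1 + ρ) - t) := by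
  have h1ρ : (0:ℝ) < 1 - ρ := by linarith
  have h1ρ' : (0:ℝ) < 1 + ρ := by linarith
  have h1ρ2 : (0:ℝ) < 1 - ρ ^ 2 := by nlinarith
  have hsg : (0:ℝ) < ρ * (1 - ρ) / (1 + ρ) := by positivity
  have hr2 : Real.sqrt ρ ^ 2 = ρ := Real.sq_sqrt hρ0.le
  have hs2 : Real.sqrt (1 - ρ) ^ 2 = 1 - ρ := Real.sq_sqrt h1ρ.le
  have hsg2 : Real.sqrt (ρ * (1 - ρ) / (1 + ρ)) ^ 2 = ρ * (1 - ρ) / (1 + ρ) := Real.sq_sqrt hsg.le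
  have h2π : (0:ℝ) < Real.sqrt (2 * π) := Real.sqrt_pos.2 (by positivity)
  have h2π2 : Real.sqrt (2 * π) ^ 2 = 2 * π := Real.sq_sqrt (by positivity)
  have hrpos : 0 < Real.sqrt ρ := Real.sqrt_pos.2 hρ0
  have hspos : 0 < Real.sqrt (1 - ρ) := Real.sqrt_pos.2 h1ρ
  have hsgpos : 0 < Real.sqrt (ρ * (1 - ρ) / (1 + ρ)) := Real.sqrt_pos.2 hsg
  have h12pos : 0 < Real.sqrt (1 - ρ ^ 2) := Real.sqrt_pos.2 h1ρ2
  have hconst : 1/(Real.sqrt (2*π) * Real.sqrt ρ) * (1/(Real.sqrt (2*π) * Real.sqrt (1-ρ)))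
      * (1/(Real.sqrt (2*π) * Real.sqrt (1-ρ)))
      = 1/(2*π*Real.sqrt (1-ρ^2)) * (1/(Real.sqrt (2*π) * Real.sqrt (ρ*(1-ρ)/(1+ρ)))) := by
    have key : Real.sqrt (1-ρ^2) * Real.sqrt (ρ*(1-ρ)/(1+ρ)) = Real.sqrt ρ * (1 - ρ) := by
      rw [← Real.sqrt_mul h1ρ2.le]
      rw [show (1-ρ^2) * (ρ*(1-ρ)/(1+ρ)) = ρ * (1-ρ)^2 by field_simp; ring]
      rw [Real.sqrt_mul hρ0.le, Real.sqrt_sq h1ρ.le]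
    have hA3 : Real.sqrt (2*π) ^ 3 = 2 * π * Real.sqrt (2*π) := by
      rw [pow_succ, h2π2]
    calc 1/(Real.sqrt (2*π) * Real.sqrt ρ) * (1/(Real.sqrt (2*π) * Real.sqrt (1-ρ)))
          * (1/(Real.sqrt (2*π) * Real.sqrt (1-ρ)))
        = 1/(Real.sqrt (2*π)^3 * (Real.sqrt ρ * Real.sqrt (1-ρ)^2)) := by ring
      _ = 1/(2*π*Real.sqrt (2*π) * (Real.sqrt (1-ρ^2) * Real.sqrt (ρ*(1-ρ)/(1+ρ)))) := by
          rw [hA3, hs2, key]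
      _ = 1/(2*π*Real.sqrt (1-ρ^2)) * (1/(Real.sqrt (2*π) * Real.sqrt (ρ*(1-ρ)/(1+ρ)))) := by
          ring
  have hexp : -(t^2) / (2 * Real.sqrt ρ ^ 2) + (-((x-t)^2) / (2 * Real.sqrt (1-ρ) ^ 2)
        + -((y-t)^2) / (2 * Real.sqrt (1-ρ) ^ 2))
      = -(x^2+y^2-2*ρ*x*y) / (2*(1-ρ^2)) + -((ρ*(x+y)/(1+ρ) - t)^2) / (2 * Real.sqrt (ρ*(1-ρ)/(1+ρ)) ^ 2) := by
    rw [hr2, hs2, hsg2]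
    field_simp
    ring
  unfold gpdf fXY
  rw [show ∀ a b c d e f : ℝ, (a*b)*(c*d)*(e*f) = (a*c*e)*(b*(d*f)) from fun _ _ _ _ _ _ => by ring]
  rw [← Real.exp_add, ← Real.exp_add, hexp, hconst, Real.exp_add]
  ring

lemma gpdf_eq (σ : ℝ) : gpdf σ = fun x => (1 / (Real.sqrt (2 * Real.pi) * σ)) *
    Real.exp (-(1/(2 * σ ^ 2)) * x ^ 2) := by
  funext x; unfold gpdf; congr 1; rw [neg_div]; ring_nf

lemma gpdf_continuous (σ : ℝ) : Continuous (gpdf σ) := by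
  rw [gpdf_eq]; fun_prop

lemma gpdf_integrable {σ : ℝ} (hσ : 0 < σ) : Integrable (gpdf σ) := by
  rw [gpdf_eq]
  exact (integrable_exp_neg_mul_sq (by positivity)).const_mul _

lemma gpdf_integral {σ : ℝ} (hσ : 0 < σ) : ∫ x : ℝ, gpdf σ x = 1 := by
  rw [gpdf_eq]
  rw [MeasureTheory.integral_const_mul, integral_gaussian]
  rw [show π / (1/(2 * σ ^ 2)) = (2 * π) * σ^2 by field_simp]
  rw [Real.sqrt_mul (show (0:ℝ) ≤ 2*π by positivity) (σ^2), Real.sqrt_sq hσ.le]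
  have h2π : 0 < Real.sqrt (2 * π) := Real.sqrt_pos.2 (by positivity)
  field_simp

lemma gpdf_shift_integrable {σ : ℝ} (hσ : 0 < σ) (a : ℝ) :
    Integrable (fun x => gpdf σ (x - a)) :=
  (gpdf_integrable hσ).comp_sub_right a

lemma gpdf_shift_integral {σ : ℝ} (hσ : 0 < σ) (a : ℝ) :
    ∫ x : ℝ, gpdf σ (x - a) = 1 := by
  rw [integral_sub_right_eq_self (gpdf σ) a, gpdf_integral hσ]

section
variable {ρ b : ℝ} (hb : 0 < b) (hρ0 : 0 < ρ) (hρ1 : ρ < 1)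

lemma sqrt_rho_pos (hρ0 : 0 < ρ) : 0 < Real.sqrt ρ := Real.sqrt_pos.2 hρ0

lemma Zpos (hb : 0 < b) (hρ0 : 0 < ρ) : 0 < ∑' j : ℤ, gpdf (Real.sqrt ρ) (b * j) := by
  have hs := summable_gpdf_lattice (sqrt_rho_pos hρ0) hb
  have := Summable.le_tsum hs 0 (fun j _ => (gpdf_pos (sqrt_rho_pos hρ0) _).le)
  have h0 : 0 < gpdf (Real.sqrt ρ) (b * (0:ℤ)) := gpdf_pos (sqrt_rho_pos hρ0) _
  linarith

lemma sg_pos (hρ0 : 0 < ρ) (hρ1 : ρ < 1) : 0 < Real.sqrt (ρ * (1 - ρ) / (1 + ρ)) := by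
  apply Real.sqrt_pos.2; have h1 : (0:ℝ) < 1 - ρ := by linarith
  have h2 : (0:ℝ) < 1 + ρ := by linarith
  positivity

lemma term_eq (hb : 0 < b) (hρ0 : 0 < ρ) (hρ1 : ρ < 1) (x y : ℝ) (k : ℤ) :
    dgauss b (Real.sqrt ρ) k * gpdf (Real.sqrt (1 - ρ)) (x - b * k) *
      gpdf (Real.sqrt (1 - ρ)) (y - b * k)
    = (fXY ρ x y / (∑' j : ℤ, gpdf (Real.sqrt ρ) (b * j))) *
        gpdf (Real.sqrt (ρ * (1 - ρ) / (1 + ρ))) (ρ * (x + y) / (1 + ρ) - b * k) := by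
  unfold dgauss
  rw [div_mul_eq_mul_div, div_mul_eq_mul_div, term_id hρ0 hρ1 x y (b * k)]
  ring

lemma fXbar_eq (hb : 0 < b) (hρ0 : 0 < ρ) (hρ1 : ρ < 1) (x y : ℝ) :
    fXbarYbar ρ b x y
      = (fXY ρ x y / (∑' j : ℤ, gpdf (Real.sqrt ρ) (b * j))) *
        ∑' k : ℤ, gpdf (Real.sqrt (ρ * (1 - ρ) / (1 + ρ))) (ρ * (x + y) / (1 + ρ) - b * k) := by
  unfold fXbarYbar
  rw [tsum_congr (term_eq hb hρ0 hρ1 x y), tsum_mul_left]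

lemma fXY_pos (hρ0 : 0 < ρ) (hρ1 : ρ < 1) (x y : ℝ) : 0 < fXY ρ x y := by
  unfold fXY
  have h : (0:ℝ) < 1 - ρ ^ 2 := by nlinarith
  have := Real.sqrt_pos.2 h
  positivity

lemma fXbar_nonneg (hb : 0 < b) (hρ0 : 0 < ρ) (hρ1 : ρ < 1) (x y : ℝ) :
    0 ≤ fXbarYbar ρ b x y := by
  rw [fXbar_eq hb hρ0 hρ1]
  have := Zpos hb hρ0
  have := fXY_pos hρ0 hρ1 x y
  have : 0 ≤ ∑' k : ℤ, gpdf (Real.sqrt (ρ * (1 - ρ) / (1 + ρ))) (ρ * (x + y) / (1 + ρ) - b * k) :=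
    tsum_nonneg fun k => (gpdf_pos (sg_pos hρ0 hρ1) _).le
  positivity

lemma fXbar_le (hb : 0 < b) (hρ0 : 0 < ρ) (hρ1 : ρ < 1) (x y : ℝ) :
    fXbarYbar ρ b x y ≤ (1 + 4 * flatness b (Real.sqrt (ρ * (1 - ρ) / (1 + ρ)))) * fXY ρ x y := by
  rw [fXbar_eq hb hρ0 hρ1]
  set ε := flatness b (Real.sqrt (ρ * (1 - ρ) / (1 + ρ))) with hε
  have hε0 : 0 ≤ ε := flatness_nonneg _ _
  have hZ := Zpos hb hρ0
  have hZ1 : 1 / b ≤ ∑' j : ℤ, gpdf (Real.sqrt ρ) (b * j) := by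
    rw [div_le_iff₀ hb] at *
    have := one_le_theta_lattice (sqrt_rho_pos hρ0) hb
    linarith [mul_comm b (∑' j : ℤ, gpdf (Real.sqrt ρ) (b * j))]
  have hnum : (∑' k : ℤ, gpdf (Real.sqrt (ρ * (1 - ρ) / (1 + ρ))) (ρ * (x + y) / (1 + ρ) - b * k))
      ≤ (1 + ε) / b := by
    rw [le_div_iff₀ hb]
    have := theta_le_flatness (sg_pos hρ0 hρ1) hb (ρ * (x + y) / (1 + ρ))
    rw [← hε] at this
    linarith [mul_comm b (∑' k : ℤ, gpdf (Real.sqrt (ρ * (1 - ρ) / (1 + ρ))) (ρ * (x + y) / (1 + ρ) - b * k))]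
  have hfXY := fXY_pos hρ0 hρ1 x y
  rw [div_mul_eq_mul_div, div_le_iff₀ hZ] at *
  calc fXY ρ x y * ∑' k : ℤ, gpdf (Real.sqrt (ρ * (1 - ρ) / (1 + ρ))) (ρ * (x + y) / (1 + ρ) - b * k)
      ≤ fXY ρ x y * ((1 + ε) / b) := by
        exact mul_le_mul_of_nonneg_left hnum hfXY.le
    _ ≤ (1 + 4 * ε) * fXY ρ x y * (∑' j : ℤ, gpdf (Real.sqrt ρ) (b * j)) := by
        have h1 : fXY ρ x y * ((1 + ε) / b) ≤ (1 + ε) * fXY ρ x y * (1/b) := by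
          rw [mul_comm]; ring_nf; rfl
        have h2 : (1 + ε) * fXY ρ x y * (1/b) ≤ (1 + 4*ε) * fXY ρ x y * (1/b) := by
          apply mul_le_mul_of_nonneg_right ?_ (by positivity)
          nlinarith
        have h3 : (1 + 4*ε) * fXY ρ x y * (1/b) ≤ (1 + 4*ε) * fXY ρ x y * (∑' j : ℤ, gpdf (Real.sqrt ρ) (b * j)) := by
          apply mul_le_mul_of_nonneg_left hZ1 (by positivity)
        linarith



lemma dgauss_nonneg (hb : 0 < b) (hρ0 : 0 < ρ) (k : ℤ) : 0 ≤ dgauss b (Real.sqrt ρ) k :=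
  div_nonneg (gpdf_pos (sqrt_rho_pos hρ0) _).le (Zpos hb hρ0).le

lemma tsum_dgauss (hb : 0 < b) (hρ0 : 0 < ρ) : ∑' k : ℤ, dgauss b (Real.sqrt ρ) k = 1 := by
  unfold dgauss
  rw [tsum_div_const, div_self (Zpos hb hρ0).ne']

/-- The `k`-th component of the mixture, as a function on the plane. -/
noncomputable def Fk (ρ b : ℝ) (k : ℤ) : ℝ × ℝ → ℝ := fun p =>
  dgauss b (Real.sqrt ρ) k * gpdf (Real.sqrt (1 - ρ)) (p.1 - b * k) *
    gpdf (Real.sqrt (1 - ρ)) (p.2 - b * k)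

lemma Fk_nonneg (hb : 0 < b) (hρ0 : 0 < ρ) (hρ1 : ρ < 1) (k : ℤ) (p : ℝ × ℝ) :
    0 ≤ Fk ρ b k p := by
  have hs : (0:ℝ) < Real.sqrt (1 - ρ) := Real.sqrt_pos.2 (by linarith)
  exact mul_nonneg (mul_nonneg (dgauss_nonneg hb hρ0 k) (gpdf_pos hs _).le) (gpdf_pos hs _).le

lemma Fk_integrable (hb : 0 < b) (hρ0 : 0 < ρ) (hρ1 : ρ < 1) (k : ℤ) :
    Integrable (Fk ρ b k) := by
  have hs : (0:ℝ) < Real.sqrt (1 - ρ) := Real.sqrt_pos.2 (by linarith)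
  have h2 : Integrable (fun p : ℝ × ℝ => gpdf (Real.sqrt (1 - ρ)) (p.1 - b * k) *
      gpdf (Real.sqrt (1 - ρ)) (p.2 - b * k)) := by
    rw [Measure.volume_eq_prod]
    exact (gpdf_shift_integrable hs _).mul_prod (gpdf_shift_integrable hs _)
  have := h2.const_mul (dgauss b (Real.sqrt ρ) k)
  refine this.congr (Filter.Eventually.of_forall fun p => ?_)
  unfold Fk; ring

lemma Fk_integral (hb : 0 < b) (hρ0 : 0 < ρ) (hρ1 : ρ < 1) (k : ℤ) :
    ∫ p : ℝ × ℝ, Fk ρ b k p = dgauss b (Real.sqrt ρ) k := by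
  have hs : (0:ℝ) < Real.sqrt (1 - ρ) := Real.sqrt_pos.2 (by linarith)
  have h1 : ∫ p : ℝ × ℝ, Fk ρ b k p
      = dgauss b (Real.sqrt ρ) k * ∫ p : ℝ × ℝ, gpdf (Real.sqrt (1 - ρ)) (p.1 - b * k) *
        gpdf (Real.sqrt (1 - ρ)) (p.2 - b * k) := by
    rw [← MeasureTheory.integral_const_mul]
    congr 1; funext p; unfold Fk; ring
  have h2 := MeasureTheory.integral_prod_mul (μ := (volume : Measure ℝ)) (ν := (volume : Measure ℝ))
    (fun x => gpdf (Real.sqrt (1 - ρ)) (x - b * k)) (fun y => gpdf (Real.sqrt (1 - ρ)) (y - b * k))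
  rw [h1, Measure.volume_eq_prod, h2, gpdf_shift_integral hs]
  ring

lemma integral_fXbar (hb : 0 < b) (hρ0 : 0 < ρ) (hρ1 : ρ < 1) :
    ∫ p : ℝ × ℝ, fXbarYbar ρ b p.1 p.2 = 1 := by
  have key : ∑' k : ℤ, (∫ p : ℝ × ℝ, Fk ρ b k p) = ∫ p : ℝ × ℝ, ∑' k : ℤ, Fk ρ b k p := by
    apply integral_tsum_of_summable_integral_norm (Fk_integrable hb hρ0 hρ1)
    have : ∀ k : ℤ, ∫ p : ℝ × ℝ, ‖Fk ρ b k p‖ = dgauss b (Real.sqrt ρ) k := by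
      intro k
      rw [← Fk_integral hb hρ0 hρ1 k]
      congr 1; funext p; exact Real.norm_of_nonneg (Fk_nonneg hb hρ0 hρ1 k p)
    rw [funext this]
    exact (summable_gpdf_lattice (sqrt_rho_pos hρ0) hb).div_const _
  have h2 : (fun p : ℝ × ℝ => fXbarYbar ρ b p.1 p.2) = fun p => ∑' k : ℤ, Fk ρ b k p := rfl
  rw [h2, ← key]
  rw [tsum_congr (Fk_integral hb hρ0 hρ1), tsum_dgauss hb hρ0]

lemma summable_Fk (hb : 0 < b) (hρ0 : 0 < ρ) (hρ1 : ρ < 1) (p : ℝ × ℝ) :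
    Summable (fun k : ℤ => Fk ρ b k p) := by
  have : Summable (fun k : ℤ => (fXY ρ p.1 p.2 / (∑' j : ℤ, gpdf (Real.sqrt ρ) (b * j))) *
      gpdf (Real.sqrt (ρ * (1 - ρ) / (1 + ρ))) (ρ * (p.1 + p.2) / (1 + ρ) - b * k)) :=
    (summable_gpdf (sg_pos hρ0 hρ1) hb _).mul_left _
  exact this.congr fun k => (term_eq hb hρ0 hρ1 p.1 p.2 k).symm

lemma fXbar_aesm (hb : 0 < b) (hρ0 : 0 < ρ) (hρ1 : ρ < 1) :
    AEStronglyMeasurable (fun p : ℝ × ℝ => fXbarYbar ρ b p.1 p.2) (volume : Measure (ℝ × ℝ)) := by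
  have hFkm : ∀ k : ℤ, Measurable (Fk ρ b k) := by
    intro k
    apply Continuous.measurable
    unfold Fk
    exact (continuous_const.mul ((gpdf_continuous _).comp (continuous_fst.sub continuous_const))).mul
      ((gpdf_continuous _).comp (continuous_snd.sub continuous_const))
  have heq : (fun p : ℝ × ℝ => fXbarYbar ρ b p.1 p.2)
      = fun p => (∑' k : ℤ, ENNReal.ofReal (Fk ρ b k p)).toReal := by
    funext p
    rw [← ENNReal.ofReal_tsum_of_nonneg (fun k => Fk_nonneg hb hρ0 hρ1 k p)
      (summable_Fk hb hρ0 hρ1 p),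
      ENNReal.toReal_ofReal (tsum_nonneg fun k => Fk_nonneg hb hρ0 hρ1 k p)]
    rfl
  rw [heq]
  exact ((Measurable.ennreal_tsum fun k => (hFkm k).ennreal_ofReal).ennreal_toReal).aestronglyMeasurable

lemma fXY_continuous (hρ0 : 0 < ρ) (hρ1 : ρ < 1) :
    Continuous (fun p : ℝ × ℝ => fXY ρ p.1 p.2) := by
  unfold fXY; fun_prop

lemma fXY_integrable (hρ0 : 0 < ρ) (hρ1 : ρ < 1) :
    Integrable (fun p : ℝ × ℝ => fXY ρ p.1 p.2) := by
  have h1ρ2 : (0:ℝ) < 1 - ρ ^ 2 := by nlinarith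
  have hc : (0:ℝ) < 1 / (2 * (1 + ρ)) := by positivity
  set C : ℝ := 1 / (2 * π * Real.sqrt (1 - ρ ^ 2)) with hC
  have hCpos : 0 < C := by
    have := Real.sqrt_pos.2 h1ρ2; positivity
  have hbound : Integrable (fun p : ℝ × ℝ =>
      C * (Real.exp (-(1/(2*(1+ρ))) * p.1 ^ 2) * Real.exp (-(1/(2*(1+ρ))) * p.2 ^ 2))) := by
    rw [Measure.volume_eq_prod]
    exact ((integrable_exp_neg_mul_sq hc).mul_prod (integrable_exp_neg_mul_sq hc)).const_mul _
  refine hbound.mono' (fXY_continuous hρ0 hρ1).aestronglyMeasurable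
    (Filter.Eventually.of_forall fun p => ?_)
  rw [Real.norm_of_nonneg]
  · unfold fXY
    rw [← Real.exp_add]
    apply mul_le_mul_of_nonneg_left _ hCpos.le
    rw [Real.exp_le_exp]
    rw [div_le_iff₀ (by positivity : (0:ℝ) < 2 * (1 - ρ^2))]
    have hq : (1 - ρ) * (p.1^2 + p.2^2) ≤ p.1^2 + p.2^2 - 2*ρ*p.1*p.2 := by nlinarith [sq_nonneg (p.1 - p.2)]
    have expand : (-(1/(2*(1+ρ))) * p.1^2 + -(1/(2*(1+ρ))) * p.2^2) * (2 * (1-ρ^2))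
        = -((1-ρ) * (p.1^2 + p.2^2)) := by field_simp; ring
    rw [expand]
    linarith
  · unfold fXY
    have := Real.sqrt_pos.2 h1ρ2
    positivity

end


/-- if `ε = ε_Λ(√(ρ(1-ρ)/(1+ρ))) < 1/2`, then the Kullback–Leibler divergence
of the mixture density from the bivariate Gaussian density is at most `ln(1 + 4ε)`. -/
theorem kl_divergence_le (ρ b : ℝ) (hb : 0 < b) (hρ0 : 0 < ρ) (hρ1 : ρ < 1)
    (hε : flatness b (Real.sqrt (ρ * (1 - ρ) / (1 + ρ))) < 1 / 2) :
    ∫ p : ℝ × ℝ, fXbarYbar ρ b p.1 p.2 * Real.log (fXbarYbar ρ b p.1 p.2 / fXY ρ p.1 p.2) ≤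
      Real.log (1 + 4 * flatness b (Real.sqrt (ρ * (1 - ρ) / (1 + ρ)))) := by
  set ε := flatness b (Real.sqrt (ρ * (1 - ρ) / (1 + ρ))) with hεdef
  have hε0 : 0 ≤ ε := flatness_nonneg _ _
  have hone : (1:ℝ) ≤ 1 + 4 * ε := by linarith
  have hlog0 : 0 ≤ Real.log (1 + 4 * ε) := Real.log_nonneg hone
  have hptwise : ∀ p : ℝ × ℝ,
      fXbarYbar ρ b p.1 p.2 * Real.log (fXbarYbar ρ b p.1 p.2 / fXY ρ p.1 p.2)
        ≤ fXbarYbar ρ b p.1 p.2 * Real.log (1 + 4 * ε) := by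
    intro p
    rcases (fXbar_nonneg hb hρ0 hρ1 p.1 p.2).eq_or_lt with h | h
    · rw [← h]; simp
    · apply mul_le_mul_of_nonneg_left ?_ h.le
      apply Real.log_le_log (div_pos h (fXY_pos hρ0 hρ1 p.1 p.2))
      rw [div_le_iff₀ (fXY_pos hρ0 hρ1 p.1 p.2)]
      exact fXbar_le hb hρ0 hρ1 p.1 p.2
  have hfXbar_int : Integrable (fun p : ℝ × ℝ => fXbarYbar ρ b p.1 p.2) := by
    refine ((fXY_integrable hρ0 hρ1).const_mul (1 + 4 * ε)).mono'
      (fXbar_aesm hb hρ0 hρ1) (Filter.Eventually.of_forall fun p => ?_)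
    rw [Real.norm_of_nonneg (fXbar_nonneg hb hρ0 hρ1 p.1 p.2)]
    exact fXbar_le hb hρ0 hρ1 p.1 p.2
  by_cases hInt : Integrable (fun p : ℝ × ℝ =>
      fXbarYbar ρ b p.1 p.2 * Real.log (fXbarYbar ρ b p.1 p.2 / fXY ρ p.1 p.2))
  · calc ∫ p : ℝ × ℝ, fXbarYbar ρ b p.1 p.2 * Real.log (fXbarYbar ρ b p.1 p.2 / fXY ρ p.1 p.2)
        ≤ ∫ p : ℝ × ℝ, fXbarYbar ρ b p.1 p.2 * Real.log (1 + 4 * ε) :=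
          integral_mono hInt (hfXbar_int.mul_const _) hptwise
      _ = (∫ p : ℝ × ℝ, fXbarYbar ρ b p.1 p.2) * Real.log (1 + 4 * ε) := by
          rw [MeasureTheory.integral_mul_const]
      _ = Real.log (1 + 4 * ε) := by rw [integral_fXbar hb hρ0 hρ1, one_mul]
  · rw [MeasureTheory.integral_undef hInt]
    exact hlog0
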